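/- If W ∈ ℝ^{N×N} is the weighted adjacency matrix of a directed graph and tr(exp(W ∘ W)) = N (where ∘ is the Hadamard product), then the graph with edge set {(i,j) : W_{ij} ≠ 0} is acyclic. -/

import Mathlib

open Matrix NormedSpace
open scoped Matrix

/-- If `tr(exp(W ∘ W)) = N` for the weighted adjacency matrix `W` (with `∘` the Hadamard
product), then the directed graph with edges `{(i,j) : W i j ≠ 0}` is acyclic: there is
no closed walk all of whose steps go through nonzero entries of `W`. -/
theorem trace_exp_hadamard_eq_card_implies_acyclic
    (N : ℕ) (W : Matrix (Fin N) (Fin N) ℝ)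
    (h : Matrix.trace (exp (W ⊙ W)) = N) :
    ∀ (k : ℕ) (c : ℕ → Fin N), 0 < k → c k = c 0 →
      ∃ i < k, W (c i) (c (i + 1)) = 0 := by
  letI : SeminormedRing (Matrix (Fin N) (Fin N) ℝ) := Matrix.linftyOpSemiNormedRing
  letI : NormedRing (Matrix (Fin N) (Fin N) ℝ) := Matrix.linftyOpNormedRing
  letI : NormedAlgebra ℝ (Matrix (Fin N) (Fin N) ℝ) := Matrix.linftyOpNormedAlgebra
  set B := W ⊙ W with hBdef
  have hB : ∀ i j, 0 ≤ B i j := fun i j => by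
    simp only [hBdef, Matrix.hadamard_apply]
    exact mul_self_nonneg _
  have hBpow : ∀ (k : ℕ) (i j : Fin N), 0 ≤ (B ^ k) i j := by
    intro k
    induction k with
    | zero =>
      intro i j
      by_cases hij : i = j <;> simp [pow_zero, Matrix.one_apply, hij]
    | succ n ih =>
      intro i j
      rw [pow_succ, Matrix.mul_apply]
      exact Finset.sum_nonneg fun l _ => mul_nonneg (ih i l) (hB l j)
  have hwalk : ∀ (k : ℕ) (c : ℕ → Fin N),
      (∏ i ∈ Finset.range k, B (c i) (c (i + 1))) ≤ (B ^ k) (c 0) (c k) := by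
    intro k
    induction k with
    | zero => intro c; simp [Matrix.one_apply]
    | succ n ih =>
      intro c
      rw [Finset.prod_range_succ, pow_succ, Matrix.mul_apply]
      calc (∏ i ∈ Finset.range n, B (c i) (c (i + 1))) * B (c n) (c (n + 1))
          ≤ (B ^ n) (c 0) (c n) * B (c n) (c (n + 1)) :=
            mul_le_mul_of_nonneg_right (ih c) (hB _ _)
        _ ≤ ∑ l, (B ^ n) (c 0) l * B l (c (n + 1)) :=
            Finset.single_le_sum (f := fun l => (B ^ n) (c 0) l * B l (c (n + 1))) (fun l _ => mul_nonneg (hBpow n _ _) (hB _ _))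
              (Finset.mem_univ (c n))
  -- trace of exp as a sum
  have hsum : HasSum (fun n : ℕ => ((Nat.factorial n : ℝ))⁻¹ • B ^ n) (exp B) :=
    exp_series_hasSum_exp' B
  let T : Matrix (Fin N) (Fin N) ℝ →L[ℝ] ℝ :=
    LinearMap.toContinuousLinearMap (Matrix.traceLinearMap (Fin N) ℝ ℝ)
  have hsum2 : HasSum (fun n : ℕ => ((Nat.factorial n : ℝ))⁻¹ * Matrix.trace (B ^ n)) ((N : ℝ)) := by
    have h1 := hsum.mapL T
    have h2 : ∀ n : ℕ, T (((Nat.factorial n : ℝ))⁻¹ • B ^ n) = ((Nat.factorial n : ℝ))⁻¹ * Matrix.trace (B ^ n) := by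
      intro n
      simp [T, smul_eq_mul]
    have h3 : T (exp B) = (N : ℝ) := by
      simpa [T] using h
    rw [h3] at h1
    exact h1.congr_fun fun n => (h2 n).symm
  have h0 : HasSum (fun n : ℕ => (Nat.factorial (n + 1) : ℝ)⁻¹ * Matrix.trace (B ^ (n + 1))) 0 := by
    have hshift : ((N : ℝ)) - ∑ i ∈ Finset.range 1,
        ((Nat.factorial i : ℝ))⁻¹ * Matrix.trace (B ^ i) = 0 := by
      simp [Matrix.trace_one]
    have h4 := (hasSum_nat_add_iff' (f := fun n : ℕ => ((Nat.factorial n : ℝ))⁻¹ * Matrix.trace (B ^ n)) 1).mpr hsum2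
    rw [hshift] at h4
    exact h4
  have htrace0 : ∀ k : ℕ, 0 < k → Matrix.trace (B ^ k) = 0 := by
    intro k hk
    obtain ⟨n, rfl⟩ := Nat.exists_eq_add_of_lt hk
    simp only [zero_add] at *
    have hnn : ∀ m : ℕ, 0 ≤ (Nat.factorial (m + 1) : ℝ)⁻¹ * Matrix.trace (B ^ (m + 1)) := by
      intro m
      refine mul_nonneg (by positivity) ?_
      exact Finset.sum_nonneg fun i _ => hBpow _ i i
    have hle : (Nat.factorial (n + 1) : ℝ)⁻¹ * Matrix.trace (B ^ (n + 1)) ≤ 0 :=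
      le_hasSum h0 n fun j _ => hnn j
    have heq : (Nat.factorial (n + 1) : ℝ)⁻¹ * Matrix.trace (B ^ (n + 1)) = 0 :=
      le_antisymm hle (hnn n)
    have hfac : (Nat.factorial (n + 1) : ℝ)⁻¹ ≠ 0 := by positivity
    exact (mul_eq_zero.mp heq).resolve_left hfac
  intro k c hk hc
  by_contra hcon
  push_neg at hcon
  have hpos : 0 < ∏ i ∈ Finset.range k, B (c i) (c (i + 1)) := by
    apply Finset.prod_pos
    intro i hi
    have hne := hcon i (Finset.mem_range.mp hi)
    have : 0 < W (c i) (c (i + 1)) * W (c i) (c (i + 1)) := mul_self_pos.mpr hne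
    simpa [hBdef, Matrix.hadamard_apply] using this
  have hdiag : (0 : ℝ) < (B ^ k) (c 0) (c 0) := by
    have := hwalk k c
    rw [hc] at this
    exact lt_of_lt_of_le hpos this
  have htr : (B ^ k) (c 0) (c 0) ≤ Matrix.trace (B ^ k) :=
    Finset.single_le_sum (fun i _ => hBpow k i i) (Finset.mem_univ (c 0))
  have := htrace0 k hk
  rw [this] at htr
  exact absurd (lt_of_lt_of_le hdiag htr) (lt_irrefl 0)
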